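/- Let μ be a valuated matroid of rank k on [n] and μ* its dual. Identify [2n] with [n] ⊔ [n̄] where ī = n+i. Then for every n-subset J = B₁ ⊔ B₂ of [2n] (B₁ ⊆ [n], B₂ in the barred copy), one has (μ⊕μ*)_{[2n]∖J} = (μ⊕μ*)_{J̄}, where J̄ is obtained by swapping barred and unbarred elements of J. Consequently, by Rincón's criterion, the conormal bundle L_{μ⊕μ*} is tropically isotropic. -/

import Mathlib

/-- The minimum of `f` is attained at least twice, or `f` is identically `∞`. -/
def AAT {ι : Type*} (f : ι → WithTop ℝ) : Prop :=
  (∀ i, f i = ⊤) ∨ ∃ i j, i ≠ j ∧ f i = f j ∧ ∀ l, f i ≤ f l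

/-- The tropical linear space of a (valuated matroid) vector `ν` of rank `r` on ground set `m`. -/
def TLS {m : Type*} [Fintype m] [DecidableEq m] (r : ℕ) (ν : Finset m → WithTop ℝ) :
    Set (m → WithTop ℝ) :=
  {x | ∀ T : Finset m, T.card = r + 1 →
    AAT (fun i : {i : m // i ∈ T} => ν (T.erase (i : m)) + x (i : m))}

def part1 {n : ℕ} (J : Finset (Fin n ⊕ Fin n)) : Finset (Fin n) :=
  Finset.univ.filter fun a => Sum.inl a ∈ J

def part2 {n : ℕ} (J : Finset (Fin n ⊕ Fin n)) : Finset (Fin n) :=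
  Finset.univ.filter fun a => Sum.inr a ∈ J

/-- The direct sum `μ ⊕ μ*` of a valuated matroid with its dual. -/
def conormal {n : ℕ} (μ : Finset (Fin n) → WithTop ℝ) (J : Finset (Fin n ⊕ Fin n)) :
    WithTop ℝ :=
  μ (part1 J) + μ ((part2 J)ᶜ)


section ConormalAux

open Finset

lemma part1_compl {n : ℕ} (J : Finset (Fin n ⊕ Fin n)) : part1 Jᶜ = (part1 J)ᶜ := by
  ext a; simp [part1]

lemma part2_compl {n : ℕ} (J : Finset (Fin n ⊕ Fin n)) : part2 Jᶜ = (part2 J)ᶜ := by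
  ext a; simp [part2]

lemma part1_swap {n : ℕ} (J : Finset (Fin n ⊕ Fin n)) : part1 (J.image Sum.swap) = part2 J := by
  ext a
  simp only [part1, part2, mem_filter, mem_univ, true_and, Finset.mem_image]
  constructor
  · rintro ⟨b, hb, hb2⟩
    cases b with
    | inl c => simp at hb2
    | inr c => rw [Sum.swap_inr, Sum.inl.injEq] at hb2; exact hb2 ▸ hb
  · intro h; exact ⟨Sum.inr a, h, rfl⟩

lemma part2_swap {n : ℕ} (J : Finset (Fin n ⊕ Fin n)) : part2 (J.image Sum.swap) = part1 J := by
  ext a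
  simp only [part1, part2, mem_filter, mem_univ, true_and, Finset.mem_image]
  constructor
  · rintro ⟨b, hb, hb2⟩
    cases b with
    | inr c => simp at hb2
    | inl c => rw [Sum.swap_inl, Sum.inr.injEq] at hb2; exact hb2 ▸ hb
  · intro h; exact ⟨Sum.inl a, h, rfl⟩

lemma swap_inj {n : ℕ} : Function.Injective (Sum.swap : Fin n ⊕ Fin n → Fin n ⊕ Fin n) :=
  Function.LeftInverse.injective Sum.swap_swap

lemma ortho {n : ℕ} (ν : Finset (Fin n ⊕ Fin n) → WithTop ℝ)
    (hkey : ∀ J : Finset (Fin n ⊕ Fin n), ν Jᶜ = ν (J.image Sum.swap))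
    (hfin : ∃ B : Finset (Fin n ⊕ Fin n), ν B ≠ ⊤ ∧ B.card = n)
    {x y : (Fin n ⊕ Fin n) → WithTop ℝ} (hx : x ∈ TLS n ν) (hy : y ∈ TLS n ν) :
    AAT (fun l : Fin n ⊕ Fin n => x l + y (Sum.swap l)) := by
  classical
  by_contra hcon
  set z : (Fin n ⊕ Fin n) → WithTop ℝ := fun l => y (Sum.swap l) with hzdef
  rw [AAT] at hcon
  push_neg at hcon
  obtain ⟨⟨l0, hl0⟩, hpair⟩ := hcon
  obtain ⟨e, -, he⟩ := Finset.exists_min_image Finset.univ (fun l => x l + z l)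
    ⟨l0, Finset.mem_univ _⟩
  have hemin : ∀ l, x e + z e ≤ x l + z l := fun l => he l (Finset.mem_univ l)
  have hfe : x e + z e ≠ ⊤ := by
    intro h
    exact hl0 (top_le_iff.1 (h ▸ hemin l0))
  have hxe : x e ≠ ⊤ := (WithTop.add_ne_top.1 hfe).1
  have hze : z e ≠ ⊤ := (WithTop.add_ne_top.1 hfe).2
  have hstrict : ∀ l, l ≠ e → x e + z e < x l + z l := by
    intro l hl
    refine lt_of_le_of_ne (hemin l) ?_
    intro heq
    obtain ⟨l', hl'⟩ := hpair e l (fun h => hl h.symm) heq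
    exact absurd (hemin l') (not_le.2 hl')
  have hn : 0 < n := by
    rcases e with a | a <;> exact lt_of_le_of_lt (Nat.zero_le _) a.isLt
  have hcardE : Fintype.card (Fin n ⊕ Fin n) = n + n := by simp
  -- Lemma 1 : basis exchange from the x-side
  have L1 : ∀ B : Finset (Fin n ⊕ Fin n), B.card = n → ν B ≠ ⊤ → e ∉ B →
      ∃ i ∈ B, ν (insert e (B.erase i)) + x i ≤ ν B + x e := by
    intro B hBc hBν heB
    have hT : (insert e B).card = n + 1 := by rw [Finset.card_insert_of_notMem heB, hBc]
    have hAAT := hx (insert e B) hT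
    have heT : e ∈ insert e B := Finset.mem_insert_self _ _
    have hfeval : ν ((insert e B).erase e) + x e = ν B + x e := by
      rw [Finset.erase_insert heB]
    have hfene : ν B + x e ≠ ⊤ := WithTop.add_ne_top.2 ⟨hBν, hxe⟩
    rcases hAAT with hall | ⟨i, j, hij, hvij, hmin⟩
    · exact absurd (hfeval ▸ hall ⟨e, heT⟩) hfene
    · have hmine : ν ((insert e B).erase (i : Fin n ⊕ Fin n)) + x (i : Fin n ⊕ Fin n)
          ≤ ν B + x e := hfeval ▸ hmin ⟨e, heT⟩
      obtain ⟨i0, hi0T, hi0e, hi0le⟩ :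
          ∃ i0, i0 ∈ insert e B ∧ i0 ≠ e ∧
            ν ((insert e B).erase i0) + x i0 ≤ ν B + x e := by
        by_cases hcase : (i : Fin n ⊕ Fin n) = e
        · refine ⟨(j : Fin n ⊕ Fin n), j.2, ?_, le_trans (le_of_eq hvij.symm) hmine⟩
          intro hje
          exact hij (Subtype.ext (hcase.trans hje.symm))
        · exact ⟨(i : Fin n ⊕ Fin n), i.2, hcase, hmine⟩
      have hi0B : i0 ∈ B := Finset.mem_of_mem_insert_of_ne hi0T hi0e
      have herase : (insert e B).erase i0 = insert e (B.erase i0) :=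
        Finset.erase_insert_of_ne (Ne.symm hi0e)
      exact ⟨i0, hi0B, by rwa [herase] at hi0le⟩
  -- Lemma 2 : basis exchange from the z-side (uses the key identity)
  have L2 : ∀ B : Finset (Fin n ⊕ Fin n), B.card = n → ν B ≠ ⊤ → e ∈ B →
      ∃ i, i ∉ B ∧ ν (insert i (B.erase e)) + z i ≤ ν B + z e := by
    intro B hBc hBν heB
    set S := B.erase e with hS
    have hSc : S.card = n - 1 := by rw [hS, Finset.card_erase_of_mem heB, hBc]
    have hScompl : Sᶜ.card = n + 1 := by
      rw [Finset.card_compl, hSc, hcardE]; omega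
    set T := Sᶜ.image Sum.swap with hT
    have hTc : T.card = n + 1 := by
      rw [hT, Finset.card_image_of_injective _ swap_inj, hScompl]
    have hval : ∀ i ∈ Sᶜ, ν (T.erase (Sum.swap i)) + y (Sum.swap i) = ν (insert i S) + z i := by
      intro i hiS
      have h1 : T.erase (Sum.swap i) = (Sᶜ.erase i).image Sum.swap := by
        rw [hT, Finset.image_erase swap_inj]
      have h2 : (Sᶜ.erase i)ᶜ = insert i S := by
        ext a
        simp only [Finset.mem_compl, Finset.mem_erase, Finset.mem_insert]
        by_cases ha : a = i <;> simp [ha]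
      rw [h1, ← hkey, h2]
    have heS : e ∈ Sᶜ := by simp [hS]
    have hswe : Sum.swap e ∈ T := Finset.mem_image_of_mem _ heS
    have hBeq : insert e S = B := Finset.insert_erase heB
    have hfene : ν B + z e ≠ ⊤ := WithTop.add_ne_top.2 ⟨hBν, hze⟩
    have hveq : ν (T.erase (Sum.swap e)) + y (Sum.swap e) = ν B + z e := by
      rw [hval e heS, hBeq]
    rcases hy T hTc with hall | ⟨j1, j2, hj12, hv12, hmin⟩
    · exact absurd (hveq ▸ hall ⟨Sum.swap e, hswe⟩) hfene
    · have hmine : ν (T.erase (j1 : Fin n ⊕ Fin n)) + y (j1 : Fin n ⊕ Fin n) ≤ ν B + z e :=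
        hveq ▸ hmin ⟨Sum.swap e, hswe⟩
      obtain ⟨j0, hj0T, hj0e, hj0le⟩ :
          ∃ j0, j0 ∈ T ∧ j0 ≠ Sum.swap e ∧ ν (T.erase j0) + y j0 ≤ ν B + z e := by
        by_cases hcase : (j1 : Fin n ⊕ Fin n) = Sum.swap e
        · refine ⟨(j2 : Fin n ⊕ Fin n), j2.2, ?_, le_trans (le_of_eq hv12.symm) hmine⟩
          intro hje
          exact hj12 (Subtype.ext (hcase.trans hje.symm))
        · exact ⟨(j1 : Fin n ⊕ Fin n), j1.2, hcase, hmine⟩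
      obtain ⟨i, hiS, hieq⟩ := Finset.mem_image.1 hj0T
      have hie : i ≠ e := by
        intro h; exact hj0e (by rw [← hieq, h])
      have hiB : i ∉ B := by
        intro hiB'
        exact (Finset.mem_compl.1 hiS) (Finset.mem_erase.2 ⟨hie, hiB'⟩)
      refine ⟨i, hiB, ?_⟩
      have := hval i hiS
      rw [hieq] at this
      rw [← this]
      exact hj0le
  clear hpair hl0
  -- a starting basis avoiding e
  obtain ⟨B0, hB0ν, hB0c⟩ := hfin
  have hex : ∃ B : Finset (Fin n ⊕ Fin n), B.card = n ∧ ν B ≠ ⊤ ∧ e ∉ B := by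
    by_cases heB0 : e ∈ B0
    · obtain ⟨i, hiB, hle⟩ := L2 B0 hB0c hB0ν heB0
      have hne' : ν B0 + z e ≠ ⊤ := WithTop.add_ne_top.2 ⟨hB0ν, hze⟩
      have hfin2 : ν (insert i (B0.erase e)) ≠ ⊤ :=
        (WithTop.add_ne_top.1 (ne_top_of_le_ne_top hne' hle)).1
      refine ⟨insert i (B0.erase e), ?_, hfin2, ?_⟩
      · rw [Finset.card_insert_of_notMem (fun h => hiB (Finset.mem_of_mem_erase h)),
          Finset.card_erase_of_mem heB0, hB0c]
        omega
      · intro h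
        rcases Finset.mem_insert.1 h with h | h
        · exact hiB (by rwa [h] at heB0)
        · exact Finset.notMem_erase _ _ h
    · exact ⟨B0, hB0c, hB0ν, heB0⟩
  set c : Finset (Fin n ⊕ Fin n) → ℕ := fun B => (B.filter (fun i => z i = ⊤)).card with hc
  set Ψ : Finset (Fin n ⊕ Fin n) → ℝ := fun B =>
    (ν B).untopD 0 + ∑ i ∈ B.filter (fun i => ¬ z i = ⊤), (z i).untopD 0 with hΨ
  set 𝔹 : Finset (Finset (Fin n ⊕ Fin n)) :=
    Finset.univ.filter (fun B => B.card = n ∧ ν B ≠ ⊤ ∧ e ∉ B) with h𝔹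
  have h𝔹mem : ∀ B, B ∈ 𝔹 ↔ (B.card = n ∧ ν B ≠ ⊤ ∧ e ∉ B) := by
    intro B; simp [h𝔹]
  obtain ⟨Bex, hBexc, hBexν, hBexe⟩ := hex
  obtain ⟨Bc', hBc'mem, hBc'min⟩ := Finset.exists_min_image 𝔹 c
    ⟨Bex, (h𝔹mem _).2 ⟨hBexc, hBexν, hBexe⟩⟩
  obtain ⟨B, hBmem', hBmin⟩ := Finset.exists_min_image (𝔹.filter (fun B => c B = c Bc')) Ψ
    ⟨Bc', Finset.mem_filter.2 ⟨hBc'mem, rfl⟩⟩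
  obtain ⟨hBmem, hBcmin⟩ := Finset.mem_filter.1 hBmem'
  obtain ⟨hBc, hBν, heB⟩ := (h𝔹mem _).1 hBmem
  -- the exchange move
  obtain ⟨i1, hi1B, hle1⟩ := L1 B hBc hBν heB
  set B1 := insert e (B.erase i1) with hB1
  have hi1e : i1 ≠ e := fun h => heB (h ▸ hi1B)
  have heB'e : e ∉ B.erase i1 := fun h => heB (Finset.mem_of_mem_erase h)
  have hB1c : B1.card = n := by
    rw [hB1, Finset.card_insert_of_notMem heB'e, Finset.card_erase_of_mem hi1B, hBc]; omega
  have hle1top : ν B1 + x i1 ≠ ⊤ := ne_top_of_le_ne_top (WithTop.add_ne_top.2 ⟨hBν, hxe⟩) hle1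
  have hB1ν : ν B1 ≠ ⊤ := (WithTop.add_ne_top.1 hle1top).1
  have hxi1 : x i1 ≠ ⊤ := (WithTop.add_ne_top.1 hle1top).2
  have heB1 : e ∈ B1 := Finset.mem_insert_self _ _
  obtain ⟨i2, hi2B1, hle2⟩ := L2 B1 hB1c hB1ν heB1
  have hB1erase : B1.erase e = B.erase i1 := by rw [hB1, Finset.erase_insert heB'e]
  rw [hB1erase] at hle2
  set B2 := insert i2 (B.erase i1) with hB2
  have hle2top : ν B2 + z i2 ≠ ⊤ := ne_top_of_le_ne_top (WithTop.add_ne_top.2 ⟨hB1ν, hze⟩) hle2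
  have hB2ν : ν B2 ≠ ⊤ := (WithTop.add_ne_top.1 hle2top).1
  have hzi2 : z i2 ≠ ⊤ := (WithTop.add_ne_top.1 hle2top).2
  have hi2e : i2 ≠ e := fun h => hi2B1 (h ▸ heB1)
  have hi2B' : i2 ∉ B.erase i1 := by
    intro h
    rw [← hB1erase] at h
    exact hi2B1 (Finset.mem_of_mem_erase h)
  obtain ⟨b, hb⟩ := WithTop.ne_top_iff_exists.1 hBν
  obtain ⟨b1, hb1⟩ := WithTop.ne_top_iff_exists.1 hB1ν
  obtain ⟨b2, hb2⟩ := WithTop.ne_top_iff_exists.1 hB2ν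
  obtain ⟨xe, hxe'⟩ := WithTop.ne_top_iff_exists.1 hxe
  obtain ⟨ze, hze'⟩ := WithTop.ne_top_iff_exists.1 hze
  obtain ⟨x1, hx1'⟩ := WithTop.ne_top_iff_exists.1 hxi1
  obtain ⟨z2, hz2'⟩ := WithTop.ne_top_iff_exists.1 hzi2
  have r1 : b1 + x1 ≤ b + xe := by
    rw [← hb1, ← hx1', ← hb, ← hxe', ← WithTop.coe_add, ← WithTop.coe_add,
      WithTop.coe_le_coe] at hle1
    exact hle1
  by_cases hcase : i2 = i1
  · -- then B2 = B and we contradict the uniqueness of the minimizer e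
    have hB2B : B2 = B := by rw [hB2, hcase, Finset.insert_erase hi1B]
    rw [hB2B, hcase] at hle2
    have hz1' : (z2 : WithTop ℝ) = z i1 := by rw [← hcase]; exact hz2'
    have r2 : b + z2 ≤ b1 + ze := by
      rw [← hb, ← hz1', ← hb1, ← hze', ← WithTop.coe_add, ← WithTop.coe_add,
        WithTop.coe_le_coe] at hle2
      exact hle2
    have hs := hstrict i1 hi1e
    rw [← hxe', ← hze', ← hx1', ← hz1', ← WithTop.coe_add, ← WithTop.coe_add,
      WithTop.coe_lt_coe] at hs
    linarith
  · -- B2 is a new basis in 𝔹 with strictly smaller measure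
    have hi2B : i2 ∉ B := fun h => hi2B' (Finset.mem_erase.2 ⟨hcase, h⟩)
    have hB2c : B2.card = n := by
      rw [hB2, Finset.card_insert_of_notMem hi2B', Finset.card_erase_of_mem hi1B, hBc]; omega
    have heB2 : e ∉ B2 := by
      intro h
      rcases Finset.mem_insert.1 h with h | h
      · exact hi2e h.symm
      · exact heB'e h
    have hB2mem : B2 ∈ 𝔹 := (h𝔹mem _).2 ⟨hB2c, hB2ν, heB2⟩
    have r2 : b2 + z2 ≤ b1 + ze := by
      rw [← hb2, ← hz2', ← hb1, ← hze', ← WithTop.coe_add, ← WithTop.coe_add,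
        WithTop.coe_le_coe] at hle2
      exact hle2
    have hfilt : B2.filter (fun i => z i = ⊤) = (B.filter (fun i => z i = ⊤)).erase i1 := by
      rw [hB2, Finset.filter_insert, if_neg hzi2, Finset.filter_erase]
    by_cases hz1top : z i1 = ⊤
    · -- the count of infinite-z elements strictly decreases
      have hi1f : i1 ∈ B.filter (fun i => z i = ⊤) := Finset.mem_filter.2 ⟨hi1B, hz1top⟩
      have hlt : c B2 < c B := by
        rw [hc]; simp only
        rw [hfilt, Finset.card_erase_of_mem hi1f]
        have := Finset.card_pos.2 ⟨i1, hi1f⟩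
        omega
      have h1 := hBc'min B2 hB2mem
      omega
    · -- the count is unchanged and Ψ strictly decreases
      obtain ⟨z1, hz1'⟩ := WithTop.ne_top_iff_exists.1 hz1top
      have hi1f : i1 ∉ B.filter (fun i => z i = ⊤) := fun h => hz1top (Finset.mem_filter.1 h).2
      have hceq : c B2 = c B := by
        rw [hc]; simp only
        rw [hfilt, Finset.erase_eq_of_notMem hi1f]
      have hB2mem' : B2 ∈ 𝔹.filter (fun B => c B = c Bc') :=
        Finset.mem_filter.2 ⟨hB2mem, hceq.trans hBcmin⟩
      have hfilt2 : B2.filter (fun i => ¬ z i = ⊤)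
          = insert i2 ((B.filter (fun i => ¬ z i = ⊤)).erase i1) := by
        rw [hB2, Finset.filter_insert, if_pos hzi2, Finset.filter_erase]
      have hi2notin : i2 ∉ (B.filter (fun i => ¬ z i = ⊤)).erase i1 := by
        intro h
        obtain ⟨hne2, hmem2⟩ := Finset.mem_erase.1 h
        exact hi2B' (Finset.mem_erase.2 ⟨hne2, (Finset.mem_filter.1 hmem2).1⟩)
      have hi1fin : i1 ∈ B.filter (fun i => ¬ z i = ⊤) := Finset.mem_filter.2 ⟨hi1B, hz1top⟩
      have hs := hstrict i1 hi1e
      rw [← hxe', ← hze', ← hx1', ← hz1', ← WithTop.coe_add, ← WithTop.coe_add,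
        WithTop.coe_lt_coe] at hs
      have hPsi : Ψ B2 < Ψ B := by
        rw [hΨ]; simp only
        rw [hfilt2, Finset.sum_insert hi2notin, Finset.sum_erase_eq_sub hi1fin,
          ← hb, ← hb2, ← hz1', ← hz2', WithTop.untopD_coe, WithTop.untopD_coe,
          WithTop.untopD_coe, WithTop.untopD_coe]
        linarith
      exact absurd (hBmin B2 hB2mem') (not_le.2 hPsi)

end ConormalAux

/-- For every `n`-subset `J` of `[2n]` one has `(μ⊕μ*)_{[2n]∖J} = (μ⊕μ*)_{J̄}`, and
consequently (by Rincón's criterion) the conormal bundle `L_{μ⊕μ*}` is tropically isotropic. -/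
theorem conormal_isotropic {n k : ℕ}
    (μ : Finset (Fin n) → WithTop ℝ)
    (hsupp : ∀ B : Finset (Fin n), B.card ≠ k → μ B = ⊤)
    (hne : ∃ B, μ B ≠ ⊤)
    (hPl : ∀ S T : Finset (Fin n), S.card = k - 1 → T.card = k + 1 →
      AAT (fun i : {i : Fin n // i ∈ T ∧ i ∉ S} =>
        μ (T.erase (i : Fin n)) + μ (insert (i : Fin n) S))) :
    (∀ J : Finset (Fin n ⊕ Fin n), J.card = n →
      conormal μ Jᶜ = conormal μ (J.image Sum.swap)) ∧
    (∀ x ∈ TLS n (conormal μ), ∀ y ∈ TLS n (conormal μ),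
      AAT (fun l : Fin n ⊕ Fin n => x l + y (Sum.swap l))) := by
  have hkey : ∀ J : Finset (Fin n ⊕ Fin n), conormal μ Jᶜ = conormal μ (J.image Sum.swap) := by
    intro J
    rw [conormal, conormal, part1_compl, part2_compl, part1_swap, part2_swap, compl_compl,
      add_comm]
  constructor
  · exact fun J _ => hkey J
  · intro x hx y hy
    obtain ⟨B0, hB0⟩ := hne
    refine ortho (conormal μ) hkey
      ⟨B0.image Sum.inl ∪ B0ᶜ.image Sum.inr, ?_, ?_⟩ hx hy
    · have h1 : part1 (B0.image Sum.inl ∪ B0ᶜ.image Sum.inr) = B0 := by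
        ext a; simp [part1]
      have h2 : part2 (B0.image Sum.inl ∪ B0ᶜ.image Sum.inr) = B0ᶜ := by
        ext a; simp [part2]
      rw [conormal, h1, h2, compl_compl]
      exact WithTop.add_ne_top.2 ⟨hB0, hB0⟩
    · have hdisj : Disjoint (B0.image Sum.inl) ((B0ᶜ).image Sum.inr : Finset (Fin n ⊕ Fin n)) := by
        simp [Finset.disjoint_left]
      rw [Finset.card_union_of_disjoint hdisj,
        Finset.card_image_of_injective _ Sum.inl_injective,
        Finset.card_image_of_injective _ Sum.inr_injective]
      have := Finset.card_add_card_compl B0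
      rw [Fintype.card_fin] at this
      omega
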